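/- The substitution Φ̃₀ = 𝓣𝓛(Φ₀), Ψ̃₀ = Φ₀^{−1}, f̃₀ = −f₀ − 2𝒟_θ ln Φ₀ preserves the constraint: if 𝒟_θ f₀ + 2Φ₀Ψ₀ = 0 then 𝒟_θ f̃₀ + 2Φ̃₀Ψ̃₀ = 0, where Φ̃₀ = Φ₀ ∂_x ln Φ₀ + Φ₀ 𝒟_θ f₀ + Φ₀² Ψ₀. -/
import Mathlib


/- The Darboux-Bäcklund substitution `f̃₀ = −f₀ − 2𝒟_θ ln Φ₀`, `Ψ̃₀ = Φ₀⁻¹`,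
`Φ̃₀ = Φ₀ ∂_x ln Φ₀ + Φ₀ 𝒟_θ f₀ + Φ₀² Ψ₀` preserves the constraint:
if `𝒟_θ f₀ + 2Φ₀Ψ₀ = 0` then `𝒟_θ f̃₀ + 2Φ̃₀Ψ̃₀ = 0`.  Superfields are modelled
as a ring `R` with parities `ev, od`, an odd superderivative `Dθ` with `Dθ² = ∂_x`,
graded Leibniz rules, even elements central and odd elements squaring to zero. -/
theorem stmt_18 {R : Type*} [Ring R]
    (ev od : R → Prop) (Dθ dx : R → R)
    (hDθ_add : ∀ a b, Dθ (a + b) = Dθ a + Dθ b)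
    (hDθ_neg : ∀ a, Dθ (-a) = -(Dθ a))
    (hdx_add : ∀ a b, dx (a + b) = dx a + dx b)
    (hdx_leib : ∀ a b, dx (a * b) = dx a * b + a * dx b)
    (hDθsq : ∀ a, Dθ (Dθ a) = dx a)
    (hLeib_ev : ∀ a b, ev a → Dθ (a * b) = Dθ a * b + a * Dθ b)
    (hLeib_od : ∀ a b, od a → Dθ (a * b) = Dθ a * b - a * Dθ b)
    (hev_central : ∀ a b, ev a → a * b = b * a)
    (hod_sq : ∀ a, od a → a * a = 0)
    (hDθ_ev : ∀ a, ev a → od (Dθ a))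
    (hDθ_od : ∀ a, od a → ev (Dθ a))
    (hmul_ev : ∀ a b, ev a → ev b → ev (a * b))
    (hmul_od : ∀ a b, od a → od b → ev (a * b))
    (hmul_eo : ∀ a b, ev a → od b → od (a * b))
    (f0 Φ0 Ψ0 Φinv : R)
    (hf0_od : od f0) (hΦ0_ev : ev Φ0) (hΨ0_ev : ev Ψ0) (hΦinv_ev : ev Φinv)
    (hinv : Φ0 * Φinv = 1) (hinv' : Φinv * Φ0 = 1)
    (hconstr : Dθ f0 + 2 * (Φ0 * Ψ0) = 0) :
    Dθ (-f0 - 2 * (Φinv * Dθ Φ0))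
      + 2 * ((Φ0 * (Φinv * dx Φ0) + Φ0 * Dθ f0 + Φ0 * Φ0 * Ψ0) * Φinv) = 0 := by

  -- basic parity facts
  have hodD : od (Dθ Φ0) := hDθ_ev _ hΦ0_ev
  have hdx_ev : ev (dx Φ0) := by rw [← hDθsq]; exact hDθ_od _ hodD
  have hDf_ev : ev (Dθ f0) := hDθ_od _ hf0_od
  -- Dθ 1 = 0
  have h1ev : ev (1 : R) := by rw [← hinv]; exact hmul_ev _ _ hΦ0_ev hΦinv_ev
  have hDθ1 : Dθ (1 : R) = 0 := by
    have h := hLeib_ev 1 1 h1ev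
    simp only [one_mul, mul_one] at h
    exact left_eq_add.mp h
  have hDθ_two : ∀ a : R, Dθ (2 * a) = 2 * Dθ a := by
    intro a
    have : (2 : R) * a = a + a := two_mul a
    rw [this, hDθ_add, two_mul]
  -- derivative of inverse
  have hrel : Dθ Φinv * Φ0 + Φinv * Dθ Φ0 = 0 := by
    have h := hLeib_ev Φinv Φ0 hΦinv_ev
    rw [hinv', hDθ1] at h
    exact h.symm
  have h3 : Dθ Φinv = -(Φinv * (Dθ Φ0 * Φinv)) := by
    have h := congrArg (fun z => z * Φinv) hrel
    simp only [add_mul, zero_mul, mul_assoc] at h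
    rw [hinv, mul_one] at h
    exact eq_neg_of_add_eq_zero_left h
  have hDDsq : Dθ Φ0 * Dθ Φ0 = 0 := hod_sq _ hodD
  have hsq : Dθ Φinv * Dθ Φ0 = 0 := by
    calc Dθ Φinv * Dθ Φ0 = -(Φinv * (Dθ Φ0 * Φinv)) * Dθ Φ0 := by rw [h3]
      _ = -(Φinv * Φinv * (Dθ Φ0 * Dθ Φ0)) := by
            rw [← hev_central Φinv (Dθ Φ0) hΦinv_ev]; noncomm_ring
      _ = 0 := by rw [hDDsq, mul_zero, neg_zero]
  -- expand the first Dθ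
  have e1 : Dθ (-f0 - 2 * (Φinv * Dθ Φ0)) = -(Dθ f0) - 2 * (Φinv * dx Φ0) := by
    rw [sub_eq_add_neg, hDθ_add, hDθ_neg, hDθ_neg, hDθ_two,
        hLeib_ev _ _ hΦinv_ev, hDθsq, hsq, zero_add, ← sub_eq_add_neg]
  -- simplify the products
  have e2 : Φ0 * (Φinv * dx Φ0) * Φinv = Φinv * dx Φ0 := by
    rw [← mul_assoc, hinv, one_mul, hev_central _ _ hΦinv_ev]
  have e3 : Φ0 * Dθ f0 * Φinv = Dθ f0 := by
    rw [hev_central _ _ hΦ0_ev, mul_assoc, hinv, mul_one]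
  have e4 : Φ0 * Φ0 * Ψ0 * Φinv = Φ0 * Ψ0 := by
    rw [mul_assoc (Φ0 * Φ0) Ψ0 Φinv, hev_central Ψ0 Φinv hΨ0_ev, ← mul_assoc,
        mul_assoc Φ0 Φ0 Φinv, hinv, mul_one]
  have key : Dθ (-f0 - 2 * (Φinv * Dθ Φ0))
      + 2 * ((Φ0 * (Φinv * dx Φ0) + Φ0 * Dθ f0 + Φ0 * Φ0 * Ψ0) * Φinv)
      = Dθ f0 + 2 * (Φ0 * Ψ0) := by
    rw [e1, add_mul, add_mul, e2, e3, e4]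
    noncomm_ring
  rw [key]
  exact hconstr
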